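/- Let Ω ⊆ ℝ^d be a domain whose boundary Γ is Ahlfors s-regular with s ∈ (0, d−1). Then for every z ∈ Γ and R > 0, the set A = Γ ∩ B(z;R) satisfies: there exist c', R' > 0 such that |A_r| ≥ c'·r^{d−s} for all r ∈ (0,R'). -/

import Mathlib

open MeasureTheory Metric Set
open Topology Filter
open scoped ENNReal NNReal

noncomputable section

/-- Euclidean space ℝ^d. -/
abbrev Euc (d : ℕ) : Type := EuclideanSpace ℝ (Fin d)


/-- The inner `r`-neighbourhood `A_r = {x ∈ closure Ω : d_A(x) < r}`. -/
def innNbhd (d : ℕ) (Ω A : Set (Euc d)) (r : ℝ) : Set (Euc d) :=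
  {x ∈ closure Ω | infDist x A < r}

/-- The boundary set `Γ` is (locally uniformly) Ahlfors `s`-regular. -/
def AhlforsRegular (d : ℕ) (Γ : Set (Euc d)) (s : ℝ) : Prop :=
  ∃ μ : Measure (Euc d), μ.Regular ∧ μ Γᶜ = 0 ∧
    ∀ x₀ ∈ Γ, ∀ R₀ : ℝ, 0 < R₀ → ∃ c > (0 : ℝ),
      ∀ x ∈ Γ ∩ ball x₀ R₀, ∀ r : ℝ, 0 < r → r < 2 * R₀ →
        ENNReal.ofReal (c⁻¹ * r ^ s) ≤ μ (Γ ∩ ball x₀ R₀ ∩ ball x r) ∧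
        μ (Γ ∩ ball x₀ R₀ ∩ ball x r) ≤ ENNReal.ofReal (c * r ^ s)

/-- Maximal r-separated subset exists. -/
lemma exists_maximal_separated {d : ℕ} (A : Set (Euc d)) {r : ℝ} (hr : 0 < r) :
    ∃ S ⊆ A, (S.Pairwise fun x y => r ≤ dist x y) ∧ ∀ y ∈ A, ∃ x ∈ S, dist y x < r := by
  obtain ⟨S, hS⟩ := zorn_subset {S : Set (Euc d) | S ⊆ A ∧ S.Pairwise fun x y => r ≤ dist x y}
    (fun c hc hchain => ⟨⋃₀ c, ⟨sUnion_subset fun t ht => (hc ht).1,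
      fun x hx y hy hxy => by
        obtain ⟨t, htc, hxt⟩ := hx
        obtain ⟨u, huc, hyu⟩ := hy
        rcases hchain.total htc huc with h | h
        · exact (hc huc).2 (h hxt) hyu hxy
        · exact (hc htc).2 hxt (h hyu) hxy⟩,
      fun s hs => subset_sUnion_of_mem hs⟩)
  refine ⟨S, hS.prop.1, hS.prop.2, fun y hy => ?_⟩
  by_contra hcon
  push_neg at hcon
  have hyS : y ∉ S := fun h => absurd (hcon y h) (by simp [hr])
  have : insert y S ∈ {S : Set (Euc d) | S ⊆ A ∧ S.Pairwise fun x y => r ≤ dist x y} := by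
    constructor
    · exact insert_subset hy hS.prop.1
    · refine hS.prop.2.insert fun x hx hxy => ?_
      have := hcon x hx
      exact ⟨this, by rwa [dist_comm]⟩
  have := hS.2 this (subset_insert y S)
  exact hyS (this (mem_insert y S))

/-- Counting separated points via a measure lower bound on disjoint balls. -/
lemma card_le_of_separated {d : ℕ} (μ : Measure (Euc d)) {S T : Set (Euc d)}
    (hT : MeasurableSet T) (hST : S ⊆ T) {r : ℝ} (hr : 0 < r)
    (hsep : S.Pairwise fun x y => r ≤ dist x y)
    {m0 : ℝ≥0∞} (hm0 : 0 < m0) (hlow : ∀ x ∈ S, m0 ≤ μ (T ∩ ball x (r/2)))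
    {M : ℝ≥0∞} (hM : M ≠ ∞) (hTM : μ T ≤ M) :
    S.Finite ∧ (S.ncard : ℝ≥0∞) * m0 ≤ M := by
  have key : ∀ F : Finset (Euc d), ↑F ⊆ S → (F.card : ℝ≥0∞) * m0 ≤ M := by
    intro F hF
    have hdisj : (↑F : Set (Euc d)).PairwiseDisjoint (fun x => T ∩ ball x (r/2)) := by
      intro x hx y hy hxy
      have hrxy := hsep (hF hx) (hF hy) hxy
      exact (ball_disjoint_ball (by linarith)).mono inter_subset_right inter_subset_right
    calc (F.card : ℝ≥0∞) * m0 = ∑ _x ∈ F, m0 := by rw [Finset.sum_const, nsmul_eq_mul]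
      _ ≤ ∑ x ∈ F, μ (T ∩ ball x (r/2)) := Finset.sum_le_sum fun x hx => hlow x (hF hx)
      _ = μ (⋃ x ∈ F, T ∩ ball x (r/2)) :=
          (measure_biUnion_finset hdisj fun x _ => hT.inter measurableSet_ball).symm
      _ ≤ μ T := measure_mono (by
          simp only [iUnion_subset_iff]
          exact fun x _ => inter_subset_left)
      _ ≤ M := hTM
  have hfin : S.Finite := by
    by_contra hinf
    have hinf' : S.Infinite := hinf
    obtain ⟨n, hn⟩ := ENNReal.exists_nat_gt (ENNReal.div_lt_top hM hm0.ne').ne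
    obtain ⟨G, hGS, hGfin, hGcard⟩ := hinf'.exists_subset_ncard_eq n
    have := key hGfin.toFinset (by simpa using hGS)
    rw [← Set.ncard_eq_toFinset_card G hGfin, hGcard] at this
    have := lt_of_lt_of_le ((ENNReal.div_lt_iff (Or.inl hm0.ne') (Or.inr hM)).1 hn) this
    exact absurd this (lt_irrefl _)
  refine ⟨hfin, ?_⟩
  have := key hfin.toFinset (by simp)
  rwa [← Set.ncard_eq_toFinset_card S hfin] at this

/-- Covering count: `Γ ∩ B(z,R)` can be covered by `≲ t^{-s}` balls of radius `t`. -/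
lemma cover_lemma {d : ℕ} {Γ : Set (Euc d)} (hΓmeas : MeasurableSet Γ)
    {μ : Measure (Euc d)} {z : Euc d} {R s c : ℝ} (hz : z ∈ Γ) (hR : 0 < R)
    (hs0 : 0 < s) (hc : 0 < c)
    (hA : ∀ x ∈ Γ ∩ ball z R, ∀ r : ℝ, 0 < r → r < 2*R →
        ENNReal.ofReal (c⁻¹ * r ^ s) ≤ μ (Γ ∩ ball z R ∩ ball x r) ∧
        μ (Γ ∩ ball z R ∩ ball x r) ≤ ENNReal.ofReal (c * r ^ s))
    {t : ℝ} (ht : 0 < t) (htR : t < R) :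
    ∃ S : Finset (Euc d), ↑S ⊆ Γ ∩ ball z R ∧ (Γ ∩ ball z R ⊆ ⋃ x ∈ S, ball x t) ∧
      (S.card : ℝ) ≤ (c^2 * 2^s * R^s) * t^(-s) := by
  obtain ⟨S0, hS0A, hsep, hmax⟩ := exists_maximal_separated (Γ ∩ ball z R) ht
  have hm0 : (0:ℝ≥0∞) < ENNReal.ofReal (c⁻¹ * (t/2)^s) := by
    rw [ENNReal.ofReal_pos]; positivity
  have hlow : ∀ x ∈ S0, ENNReal.ofReal (c⁻¹ * (t/2)^s) ≤ μ ((Γ ∩ ball z R) ∩ ball x (t/2)) :=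
    fun x hx => (hA x (hS0A hx) (t/2) (by linarith) (by linarith)).1
  have hTM : μ (Γ ∩ ball z R) ≤ ENNReal.ofReal (c * R^s) := by
    have := (hA z ⟨hz, mem_ball_self hR⟩ R hR (by linarith)).2
    rwa [inter_eq_self_of_subset_left inter_subset_right] at this
  obtain ⟨hfin, hcard⟩ := card_le_of_separated μ (hΓmeas.inter measurableSet_ball)
    hS0A ht hsep hm0 hlow ENNReal.ofReal_ne_top hTM
  refine ⟨hfin.toFinset, by simpa using hS0A, ?_, ?_⟩
  · intro y hy
    obtain ⟨x, hxS, hdist⟩ := hmax y hy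
    exact mem_iUnion₂.2 ⟨x, hfin.mem_toFinset.2 hxS, mem_ball.2 hdist⟩
  · have hn : (hfin.toFinset.card : ℝ) * (c⁻¹ * (t/2)^s) ≤ c * R^s := by
      rw [← Set.ncard_eq_toFinset_card S0 hfin]
      have h1 : ((S0.ncard : ℝ≥0∞)) = ENNReal.ofReal (S0.ncard : ℝ) :=
        (ENNReal.ofReal_natCast _).symm
      rw [h1, ← ENNReal.ofReal_mul (by positivity)] at hcard
      exact (ENNReal.ofReal_le_ofReal_iff (by positivity)).1 hcard
    set n : ℝ := (hfin.toFinset.card : ℝ) with hn'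
    have h2s : (0:ℝ) < 2^s := Real.rpow_pos_of_pos two_pos s
    have hts : (0:ℝ) < t^s := Real.rpow_pos_of_pos ht s
    have h1 : (t/2)^s = t^s / 2^s := Real.div_rpow ht.le (by norm_num : (0:ℝ) ≤ 2) s
    rw [h1] at hn
    rw [Real.rpow_neg ht.le]
    have hnn : 0 ≤ n := by positivity
    calc n = (n * (c⁻¹ * (t^s/2^s))) * (c * 2^s / t^s) := by field_simp
      _ ≤ (c * R^s) * (c * 2^s / t^s) := by
          apply mul_le_mul_of_nonneg_right hn; positivity
      _ = (c^2 * 2^s * R^s) * (t^s)⁻¹ := by ring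


set_option maxHeartbeats 1000000 in
/-- The "cone" over a set of small covering dimension, seen from a point `a`, is Lebesgue-null. -/
lemma cone_null {d : ℕ} {Γ' : Set (Euc d)} {s C t₀ : ℝ} (hs0 : 0 < s) (hsd : s < (d:ℝ) - 1)
    (ht₀ : 0 < t₀) (hC : 0 < C)
    (hcover : ∀ t : ℝ, 0 < t → t < t₀ → ∃ S : Finset (Euc d), ↑S ⊆ Γ' ∧
       (Γ' ⊆ ⋃ x ∈ S, ball x t) ∧ (S.card : ℝ) ≤ C * t^(-s))
    (a : Euc d) {δ : ℝ} (hδ : 0 < δ) (hδΓ : ∀ g ∈ Γ', δ ≤ dist a g)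
    {D : ℝ} (hD : 0 < D) (hDΓ : ∀ g ∈ Γ', dist g a ≤ D)
    {M : ℝ} (hM : 0 < M) :
    volume {y : Euc d | y ∈ ball a M ∧ ∃ g ∈ Γ', g ∈ segment ℝ a y} = 0 := by
  have hd1 : (1:ℝ) < (d:ℝ) := by linarith
  have hdpos : 0 < d := Nat.cast_pos.mp (lt_trans zero_lt_one hd1)
  haveI : Nonempty (Fin d) := ⟨⟨0, hdpos⟩⟩
  haveI hnt : Nontrivial (Euc d) := inferInstance
  set bad := {y : Euc d | y ∈ ball a M ∧ ∃ g ∈ Γ', g ∈ segment ℝ a y} with hbad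
  set ρ : ℝ := M/δ + D with hρ
  have hρpos : 0 < ρ := by positivity
  set C₁ : ℝ := C * ρ^d * (M/δ + 2) with hC₁
  have hC₁pos : 0 < C₁ := by positivity
  set B : ℝ≥0∞ := volume (ball (0 : Euc d) 1) with hB
  have hBne : B ≠ ∞ := measure_ball_lt_top.ne
  -- key estimate for each small t
  have key : ∀ t : ℝ, 0 < t → t < min t₀ 1 →
      volume bad ≤ ENNReal.ofReal (C₁ * t^((d:ℝ)-1-s)) * B := by
    intro t ht ht1'
    have htt₀ : t < t₀ := lt_of_lt_of_le ht1' (min_le_left _ _)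
    have ht1 : t ≤ 1 := le_of_lt (lt_of_lt_of_le ht1' (min_le_right _ _))
    obtain ⟨S, hSΓ, hScov, hScard⟩ := hcover t ht htt₀
    set K : ℕ := ⌈M/(δ*t)⌉₊ + 1 with hK
    -- the inclusion
    have hincl : bad ⊆ ⋃ x ∈ S, ⋃ k ∈ Finset.range K, ball (a + ((1:ℝ)+k*t) • (x - a)) (ρ*t) := by
      rintro y ⟨hyM, g, hgΓ, hgseg⟩
      rw [segment_eq_image'] at hgseg
      obtain ⟨u, ⟨hu0, hu1⟩, hgu⟩ := hgseg
      have hgu' : a + u • (y - a) = g := hgu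
      have hga : g - a = u • (y - a) := by rw [← hgu']; abel
      have hdag : dist a g = u * ‖y - a‖ := by
        rw [dist_eq_norm, ← neg_sub, norm_neg, hga, norm_smul, Real.norm_eq_abs,
          abs_of_nonneg hu0]
      have hδg := hδΓ g hgΓ
      have hupos : 0 < u := by
        rcases hu0.lt_or_eq with h | h
        · exact h
        · exfalso; rw [← h, zero_mul] at hdag; linarith
      have hyaM : ‖y - a‖ < M := by rwa [mem_ball, dist_eq_norm] at hyM
      have hyapos : 0 < ‖y - a‖ := by
        rcases (norm_nonneg (y - a)).lt_or_eq with h | h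
        · exact h
        · exfalso; rw [← h, mul_zero] at hdag; linarith
      set τ : ℝ := u⁻¹ with hτ
      have hτu : τ * u = 1 := inv_mul_cancel₀ hupos.ne'
      have hτ1 : 1 ≤ τ := by
        rw [hτ, le_inv_comm₀ one_pos hupos]; simpa using hu1
      have hδuM : δ ≤ u * M := by nlinarith
      have hτM : τ ≤ M/δ := by
        rw [le_div_iff₀ hδ]
        nlinarith [mul_nonneg (le_trans zero_le_one hτ1) (sub_nonneg.2 hδuM)]
      have hyτ : y = a + τ • (g - a) := by
        rw [hga, smul_smul, hτ, inv_mul_cancel₀ hupos.ne', one_smul]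
        abel
      obtain ⟨x, hxS, hgx⟩ := mem_iUnion₂.1 (hScov hgΓ)
      have hgxt : ‖g - x‖ < t := by rw [← dist_eq_norm]; exact mem_ball.1 hgx
      set k : ℕ := ⌊(τ-1)/t⌋₊ with hk
      have hkle : (k:ℝ) * t ≤ τ - 1 := by
        rw [← le_div_iff₀ ht]
        exact Nat.floor_le (div_nonneg (by linarith) ht.le)
      have hklt : τ - 1 - k*t < t := by
        have h := Nat.lt_floor_add_one ((τ-1)/t)
        rw [div_lt_iff₀ ht] at h
        nlinarith
      have hkK : k ∈ Finset.range K := by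
        rw [Finset.mem_range, hK]
        have h1 : (k:ℝ) ≤ M/(δ*t) := by
          calc (k:ℝ) ≤ (τ-1)/t := Nat.floor_le (div_nonneg (by linarith) ht.le)
            _ ≤ (M/δ)/t := by gcongr <;> linarith
            _ = M/(δ*t) := by ring
        have h2 : (k:ℝ) ≤ (⌈M/(δ*t)⌉₊ : ℝ) := h1.trans (Nat.le_ceil _)
        exact Nat.lt_succ_of_le (Nat.cast_le.1 h2)
      refine mem_iUnion₂.2 ⟨x, hxS, mem_iUnion₂.2 ⟨k, hkK, ?_⟩⟩
      rw [mem_ball, dist_eq_norm]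
      have hxa : ‖x - a‖ ≤ D := by
        rw [← dist_eq_norm]
        exact hDΓ x (hSΓ hxS)
      have hrewrite : y - (a + ((1:ℝ)+k*t) • (x - a)) = τ • (g - x) + (τ-(1+k*t)) • (x - a) := by
        rw [hyτ]
        module
      rw [hrewrite]
      have h1 : ‖τ • (g - x)‖ < (M/δ) * t := by
        rw [norm_smul, Real.norm_eq_abs, abs_of_pos (by linarith : (0:ℝ) < τ)]
        nlinarith [norm_nonneg (g - x)]
      have h2 : ‖(τ-(1+k*t)) • (x - a)‖ ≤ t * D := by
        rw [norm_smul, Real.norm_eq_abs, abs_of_nonneg (by linarith : (0:ℝ) ≤ τ - (1+k*t))]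
        nlinarith [norm_nonneg (x - a)]
      calc ‖τ • (g - x) + (τ-(1+k*t)) • (x - a)‖ ≤ ‖τ • (g - x)‖ + ‖(τ-(1+k*t)) • (x - a)‖ :=
            norm_add_le _ _
        _ < (M/δ) * t + t * D := by linarith
        _ = ρ * t := by rw [hρ]; ring
    -- the measure estimate
    have hvol : ∀ (x : Euc d) (k : ℕ),
        volume (ball (a + ((1:ℝ)+k*t) • (x - a)) (ρ*t)) = ENNReal.ofReal ((ρ*t)^d) * B := by
      intro x k
      rw [hB, Measure.addHaar_ball volume _ (by positivity : (0:ℝ) ≤ ρ*t),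
        finrank_euclideanSpace_fin]
    have hmeas : volume bad ≤ (S.card : ℝ≥0∞) * ((K : ℝ≥0∞) * (ENNReal.ofReal ((ρ*t)^d) * B)) := by
      refine le_trans (measure_mono hincl) ?_
      refine le_trans (measure_biUnion_finset_le _ _) ?_
      calc ∑ x ∈ S, volume (⋃ k ∈ Finset.range K, ball (a + ((1:ℝ)+k*t) • (x - a)) (ρ*t))
          ≤ ∑ x ∈ S, ∑ k ∈ Finset.range K, volume (ball (a + ((1:ℝ)+k*t) • (x - a)) (ρ*t)) :=
            Finset.sum_le_sum fun x _ => measure_biUnion_finset_le _ _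
        _ = ∑ _x ∈ S, ∑ _k ∈ Finset.range K, ENNReal.ofReal ((ρ*t)^d) * B := by
            simp_rw [hvol]
        _ = (S.card : ℝ≥0∞) * ((K:ℝ≥0∞) * (ENNReal.ofReal ((ρ*t)^d) * B)) := by
            simp [Finset.sum_const, Finset.card_range, nsmul_eq_mul, mul_assoc]
    have hcard' : (S.card : ℝ≥0∞) ≤ ENNReal.ofReal (C * t^(-s)) := by
      rw [← ENNReal.ofReal_natCast]; exact ENNReal.ofReal_le_ofReal hScard
    have hK' : (K : ℝ≥0∞) ≤ ENNReal.ofReal (M/(δ*t) + 2) := by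
      rw [← ENNReal.ofReal_natCast]
      apply ENNReal.ofReal_le_ofReal
      push_cast [hK]
      have := Nat.ceil_lt_add_one (R := ℝ) (a := M/(δ*t)) (by positivity)
      linarith
    -- the real-number inequality
    have hQ : (0:ℝ) < t ^ ((d:ℝ) - 1 - s) := Real.rpow_pos_of_pos ht _
    have hreal : C * t^(-s) * ((M/(δ*t) + 2) * (ρ*t)^d) ≤ C₁ * t^((d:ℝ)-1-s) := by
      have e3 : t^(-s) * t^(d:ℕ) = t^((d:ℝ)-s) := by
        rw [← Real.rpow_natCast t d, ← Real.rpow_add ht]; ring_nf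
      have e4 : t^((d:ℝ)-1-s) = t^((d:ℝ)-s) / t := by
        rw [show (d:ℝ)-1-s = ((d:ℝ)-s)-1 by ring, Real.rpow_sub ht, Real.rpow_one]
      have e4' : t^((d:ℝ)-s) = t^((d:ℝ)-1-s) * t := by
        rw [e4]; field_simp
      have hPQ : t^((d:ℝ)-s) ≤ t^((d:ℝ)-1-s) :=
        Real.rpow_le_rpow_of_exponent_ge ht ht1 (by linarith)
      have e5 : C * t^(-s) * ((M/(δ*t) + 2) * (ρ*t)^d)
          = C * ρ^d * ((M/(δ*t)+2) * (t^(-s) * t^(d:ℕ))) := by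
        rw [mul_pow]; ring
      rw [e5, e3]
      have e6 : (M/(δ*t)+2) * t^((d:ℝ)-s)
          = (M/δ) * t^((d:ℝ)-1-s) + 2 * t^((d:ℝ)-s) := by
        rw [e4']; field_simp
      rw [e6, hC₁]
      have hinner : (M/δ) * t^((d:ℝ)-1-s) + 2 * t^((d:ℝ)-s)
          ≤ (M/δ + 2) * t^((d:ℝ)-1-s) := by nlinarith
      calc C * ρ^d * ((M/δ) * t^((d:ℝ)-1-s) + 2 * t^((d:ℝ)-s))
          ≤ C * ρ^d * ((M/δ + 2) * t^((d:ℝ)-1-s)) := by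
            apply mul_le_mul_of_nonneg_left hinner (by positivity)
        _ = C * ρ^d * (M/δ + 2) * t^((d:ℝ)-1-s) := by ring
    -- put everything together in ℝ≥0∞
    calc volume bad ≤ (S.card : ℝ≥0∞) * ((K : ℝ≥0∞) * (ENNReal.ofReal ((ρ*t)^d) * B)) := hmeas
      _ ≤ ENNReal.ofReal (C * t^(-s)) *
            (ENNReal.ofReal (M/(δ*t) + 2) * (ENNReal.ofReal ((ρ*t)^d) * B)) := by
          gcongr
      _ = ENNReal.ofReal (C * t^(-s) * ((M/(δ*t) + 2) * (ρ*t)^d)) * B := by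
          rw [← mul_assoc, ← mul_assoc, ← ENNReal.ofReal_mul (by positivity),
            ← ENNReal.ofReal_mul (by positivity)]
          congr 2
          ring
      _ ≤ ENNReal.ofReal (C₁ * t^((d:ℝ)-1-s)) * B := by
          exact mul_le_mul_left (ENNReal.ofReal_le_ofReal hreal) B
  -- conclude by letting t → 0⁺
  have htendsto : Filter.Tendsto (fun t : ℝ => ENNReal.ofReal (C₁ * t^((d:ℝ)-1-s)) * B)
      (nhdsWithin 0 (Set.Ioi 0)) (𝓝 0) := by
    have h1 : Filter.Tendsto (fun t : ℝ => t^((d:ℝ)-1-s)) (𝓝 0) (𝓝 0) := by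
      have hcont := Real.continuousAt_rpow_const 0 ((d:ℝ)-1-s) (Or.inr (by linarith))
      have h0 : (0:ℝ)^((d:ℝ)-1-s) = 0 := Real.zero_rpow (by linarith : (0:ℝ) < (d:ℝ)-1-s).ne'
      simpa [h0] using hcont.tendsto
    have h2 : Filter.Tendsto (fun t : ℝ => ENNReal.ofReal (C₁ * t^((d:ℝ)-1-s))) (𝓝 0) (𝓝 0) := by
      have h2' := ENNReal.tendsto_ofReal (h1.const_mul C₁)
      simpa using h2'
    have h3 := ENNReal.Tendsto.mul_const h2 (Or.inr hBne)
    simpa using h3.mono_left nhdsWithin_le_nhds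
  have hev : ∀ᶠ t in nhdsWithin (0:ℝ) (Set.Ioi 0),
      volume bad ≤ ENNReal.ofReal (C₁ * t^((d:ℝ)-1-s)) * B := by
    filter_upwards [Ioo_mem_nhdsGT_of_mem (Set.mem_Ico.2 ⟨le_refl 0, lt_min ht₀ one_pos⟩)]
      with t ht'
    exact key t ht'.1 ht'.2
  have hfinal : volume bad ≤ 0 := ge_of_tendsto htendsto hev
  exact le_antisymm hfinal zero_le

/-- Near a boundary point, the closure of `Ω` has full density (at small scales). -/
lemma density_lemma {d : ℕ} {Ω : Set (Euc d)} (hΩopen : IsOpen Ω)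
    {s C t₀ : ℝ} (hs0 : 0 < s) (hsd : s < (d:ℝ)-1) (ht₀ : 0 < t₀) (hC : 0 < C)
    {z : Euc d} {R : ℝ} (hR : 0 < R)
    (hcover : ∀ t : ℝ, 0 < t → t < t₀ → ∃ S : Finset (Euc d),
       ↑S ⊆ frontier Ω ∩ ball z R ∧
       (frontier Ω ∩ ball z R ⊆ ⋃ x ∈ S, ball x t) ∧ (S.card : ℝ) ≤ C * t^(-s))
    {x : Euc d} (hx : x ∈ frontier Ω) {t : ℝ} (ht : 0 < t)
    (hsub : ball x t ⊆ ball z R) :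
    volume (ball x t) ≤ volume (closure Ω ∩ ball x t) := by
  set Γ' : Set (Euc d) := frontier Ω ∩ ball z R with hΓ'
  -- find an interior point `a` of `Ω` in the ball
  have hxcl : x ∈ closure Ω := frontier_subset_closure hx
  obtain ⟨a, haΩ, haball⟩ : ∃ a, a ∈ Ω ∧ a ∈ ball x t := by
    rcases mem_closure_iff.1 hxcl (ball x t) isOpen_ball (mem_ball_self ht) with ⟨a, ha1, ha2⟩
    exact ⟨a, ha2, ha1⟩
  -- a is at positive distance from the boundary
  obtain ⟨δ, hδpos, hδball⟩ := Metric.isOpen_iff.1 hΩopen a haΩ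
  have hδΓ : ∀ g ∈ Γ', δ ≤ dist a g := by
    intro g hg
    by_contra hlt
    push_neg at hlt
    have : g ∈ Ω := hδball (by rwa [mem_ball, dist_comm])
    have : g ∉ Ω := by
      have := hg.1
      rw [IsOpen.frontier_eq hΩopen] at this
      exact this.2
    tauto
  have hDΓ : ∀ g ∈ Γ', dist g a ≤ 2*R := by
    intro g hg
    have h1 : dist g z ≤ R := le_of_lt (mem_ball.1 hg.2)
    have h2 : dist a z ≤ R := le_of_lt (mem_ball.1 (hsub haball))
    calc dist g a ≤ dist g z + dist z a := dist_triangle g z a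
      _ ≤ R + R := by rw [dist_comm z a]; linarith
      _ = 2*R := by ring
  -- the bad cone is null
  have hbadnull := cone_null hs0 hsd ht₀ hC hcover a hδpos hδΓ (by linarith : (0:ℝ) < 2*R)
    hDΓ (by linarith : (0:ℝ) < 2*t)
  -- points of the ball outside the closure lie in the bad cone
  have hincl : ball x t \ closure Ω ⊆
      {y : Euc d | y ∈ ball a (2*t) ∧ ∃ g ∈ Γ', g ∈ segment ℝ a y} := by
    rintro y ⟨hyball, hycl⟩
    have hy2t : y ∈ ball a (2*t) := by
      rw [mem_ball]
      calc dist y a ≤ dist y x + dist x a := dist_triangle y x a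
        _ < t + t := by
            have := mem_ball.1 hyball
            have := mem_ball.1 haball
            rw [dist_comm x a]
            linarith
        _ = 2*t := by ring
    refine ⟨hy2t, ?_⟩
    by_contra hno
    push_neg at hno
    -- then the segment from a to y avoids the boundary, so y ∈ Ω
    have hseg : segment ℝ a y ⊆ ball x t := (convex_ball x t).segment_subset haball hyball
    have hsegΓ : ∀ w ∈ segment ℝ a y, w ∉ frontier Ω := by
      intro w hw hwΓ
      exact hno w ⟨hwΓ, hsub (hseg hw)⟩ hw
    have hsub2 : segment ℝ a y ⊆ Ω ∪ (closure Ω)ᶜ := by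
      intro w hw
      by_cases hwc : w ∈ closure Ω
      · left
        by_contra hwΩ
        exact hsegΓ w hw (by rw [IsOpen.frontier_eq hΩopen]; exact ⟨hwc, hwΩ⟩)
      · right; exact hwc
    have hconn : segment ℝ a y ⊆ Ω :=
      ((convex_segment a y).isPreconnected).subset_left_of_subset_union hΩopen
        (isClosed_closure).isOpen_compl (disjoint_compl_right.mono_left subset_closure)
        hsub2 ⟨a, left_mem_segment ℝ a y, haΩ⟩
    exact hycl (subset_closure (hconn (right_mem_segment ℝ a y)))
  -- conclude
  have hdiff : volume (ball x t \ closure Ω) = 0 :=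
    le_antisymm (le_trans (measure_mono hincl) (le_of_eq hbadnull)) zero_le
  calc volume (ball x t) ≤ volume (ball x t ∩ closure Ω) + volume (ball x t \ closure Ω) :=
        measure_le_inter_add_diff _ _ _
    _ = volume (closure Ω ∩ ball x t) := by rw [hdiff, add_zero, inter_comm]

set_option maxHeartbeats 1000000 in
/-- Proposition 2.3: if the boundary `Γ` of a domain `Ω ⊆ ℝ^d` is Ahlfors `s`-regular
with `s ∈ (0, d-1)`, then for every `z ∈ Γ` and `R > 0` the set `A = Γ ∩ B(z;R)`
satisfies `|A_r| ≥ c'·r^(d-s)` for all small `r > 0`. -/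
theorem stmt_3 (d : ℕ) (Ω : Set (Euc d)) (hΩopen : IsOpen Ω) (hΩconn : IsConnected Ω)
    (s : ℝ) (hs0 : 0 < s) (hsd : s < (d : ℝ) - 1)
    (hreg : AhlforsRegular d (frontier Ω) s) :
    ∀ z ∈ frontier Ω, ∀ R : ℝ, 0 < R →
      ∃ c' > (0 : ℝ), ∃ R' > (0 : ℝ), ∀ r : ℝ, 0 < r → r < R' →
        ENNReal.ofReal (c' * r ^ ((d : ℝ) - s)) ≤
          volume (innNbhd d Ω (frontier Ω ∩ ball z R) r) := by
  intro z hz R hR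
  obtain ⟨μ, hμreg, hμnull, hAhl⟩ := hreg
  obtain ⟨c, hc, hA⟩ := hAhl z hz R hR
  set Γ : Set (Euc d) := frontier Ω with hΓ
  have hΓmeas : MeasurableSet Γ := isClosed_frontier.measurableSet
  -- dimension facts
  have hd1 : (1:ℝ) < (d:ℝ) := by linarith
  have hdpos : 0 < d := Nat.cast_pos.mp (lt_trans zero_lt_one hd1)
  haveI : Nonempty (Fin d) := ⟨⟨0, hdpos⟩⟩
  haveI hnt : Nontrivial (Euc d) := inferInstance
  -- unit ball volume
  set B : ℝ≥0∞ := volume (ball (0 : Euc d) 1) with hB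
  have hBne : B ≠ ∞ := measure_ball_lt_top.ne
  have hBpos : 0 < B := measure_ball_pos _ _ one_pos
  set ω : ℝ := B.toReal with hω
  have hωpos : 0 < ω := ENNReal.toReal_pos hBpos.ne' hBne
  have hωB : B = ENNReal.ofReal ω := (ENNReal.ofReal_toReal hBne).symm
  -- covering counts
  set C : ℝ := c^2 * 2^s * R^s with hC
  have hCpos : 0 < C := by positivity
  have hcover : ∀ t : ℝ, 0 < t → t < R → ∃ S : Finset (Euc d),
      ↑S ⊆ Γ ∩ ball z R ∧ (Γ ∩ ball z R ⊆ ⋃ x ∈ S, ball x t) ∧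
      (S.card : ℝ) ≤ C * t^(-s) := fun t ht htR =>
    cover_lemma hΓmeas hz hR hs0 hc hA ht htR
  set ρ : ℝ := R/2 with hρ
  have hρpos : 0 < ρ := by positivity
  -- the constant
  refine ⟨c⁻¹ * c⁻¹ * ρ^s * ω / 2^(d:ℕ), by positivity, R/2, by positivity, ?_⟩
  intro r hr hrR'
  -- a maximal r-separated set in Γ ∩ ball z ρ
  obtain ⟨S0, hS0sub, hsep, hmax⟩ := exists_maximal_separated (Γ ∩ ball z ρ) hr
  have hS0T : S0 ⊆ Γ ∩ ball z R :=
    hS0sub.trans (inter_subset_inter_right _ (ball_subset_ball (by linarith)))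
  have hm0 : (0:ℝ≥0∞) < ENNReal.ofReal (c⁻¹ * (r/2)^s) := by
    rw [ENNReal.ofReal_pos]; positivity
  have hlow : ∀ x ∈ S0, ENNReal.ofReal (c⁻¹ * (r/2)^s) ≤ μ ((Γ ∩ ball z R) ∩ ball x (r/2)) :=
    fun x hx => (hA x (hS0T hx) (r/2) (by linarith) (by linarith)).1
  have hTM : μ (Γ ∩ ball z R) ≤ ENNReal.ofReal (c * R^s) := by
    have := (hA z ⟨hz, mem_ball_self hR⟩ R hR (by linarith)).2
    rwa [inter_eq_self_of_subset_left inter_subset_right] at this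
  obtain ⟨hfin, -⟩ := card_le_of_separated μ (hΓmeas.inter measurableSet_ball)
    hS0T hr hsep hm0 hlow ENNReal.ofReal_ne_top hTM
  set F : Finset (Euc d) := hfin.toFinset with hF
  set N : ℕ := F.card with hN
  -- lower bound on the number of points
  have hcount : ENNReal.ofReal (c⁻¹ * ρ^s) ≤ (N : ℝ≥0∞) * ENNReal.ofReal (c * r^s) := by
    have h1 : ENNReal.ofReal (c⁻¹ * ρ^s) ≤ μ (Γ ∩ ball z ρ) := by
      have := (hA z ⟨hz, mem_ball_self hR⟩ ρ hρpos (by rw [hρ]; linarith)).1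
      rwa [inter_assoc, inter_eq_self_of_subset_right (ball_subset_ball (by linarith))]
        at this
    have h2 : Γ ∩ ball z ρ ⊆ ⋃ x ∈ F, ((Γ ∩ ball z R) ∩ ball x r) := by
      intro g hg
      obtain ⟨x, hxS, hdx⟩ := hmax g hg
      refine mem_iUnion₂.2 ⟨x, hfin.mem_toFinset.2 hxS, ?_⟩
      exact ⟨⟨hg.1, ball_subset_ball (by linarith) hg.2⟩, mem_ball.2 hdx⟩
    have h3 : μ (Γ ∩ ball z ρ) ≤ ∑ x ∈ F, μ ((Γ ∩ ball z R) ∩ ball x r) :=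
      le_trans (measure_mono h2) (measure_biUnion_finset_le _ _)
    have h4 : ∑ x ∈ F, μ ((Γ ∩ ball z R) ∩ ball x r) ≤ (N : ℝ≥0∞) * ENNReal.ofReal (c * r^s) := by
      rw [hN]
      calc ∑ x ∈ F, μ ((Γ ∩ ball z R) ∩ ball x r)
          ≤ ∑ x ∈ F, ENNReal.ofReal (c * r^s) := Finset.sum_le_sum fun x hx =>
            (hA x (hS0T (hfin.mem_toFinset.1 hx)) r hr (by linarith)).2
        _ = (F.card : ℝ≥0∞) * ENNReal.ofReal (c * r^s) := by
            rw [Finset.sum_const, nsmul_eq_mul]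
    exact le_trans h1 (le_trans h3 h4)
  have hNreal : c⁻¹ * ρ^s ≤ (N:ℝ) * (c * r^s) := by
    rw [← ENNReal.ofReal_natCast, ← ENNReal.ofReal_mul (Nat.cast_nonneg _)] at hcount
    exact (ENNReal.ofReal_le_ofReal_iff (mul_nonneg (Nat.cast_nonneg _) (mul_nonneg hc.le (Real.rpow_nonneg hr.le _)))).1 hcount
  -- each small ball has full density inside closure Ω, and they sit inside the neighbourhood
  have hdens : ∀ x ∈ F, volume (ball x (r/2)) ≤ volume (closure Ω ∩ ball x (r/2)) := by
    intro x hx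
    have hxΓ : x ∈ Γ := (hS0sub (hfin.mem_toFinset.1 hx)).1
    have hxρ : x ∈ ball z ρ := (hS0sub (hfin.mem_toFinset.1 hx)).2
    refine density_lemma hΩopen hs0 hsd hR hCpos hR hcover hxΓ (by linarith) ?_
    intro y hy
    rw [mem_ball] at *
    calc dist y z ≤ dist y x + dist x z := dist_triangle y x z
      _ < r/2 + ρ := by linarith [mem_ball.1 hxρ]
      _ ≤ R := by rw [hρ] at *; linarith
  have hsubN : (⋃ x ∈ F, closure Ω ∩ ball x (r/2)) ⊆ innNbhd d Ω (Γ ∩ ball z R) r := by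
    intro y hy
    obtain ⟨x, hxF, hycl, hyb⟩ := mem_iUnion₂.1 hy
    have hxA : x ∈ Γ ∩ ball z R := hS0T (hfin.mem_toFinset.1 hxF)
    refine ⟨hycl, ?_⟩
    calc infDist y (Γ ∩ ball z R) ≤ dist y x := infDist_le_dist_of_mem hxA
      _ < r/2 := mem_ball.1 hyb
      _ < r := by linarith
  have hdisj : (↑F : Set (Euc d)).PairwiseDisjoint
      (fun x => closure Ω ∩ ball x (r/2)) := by
    intro x hx y hy hxy
    have hrxy := hsep (hfin.mem_toFinset.1 hx) (hfin.mem_toFinset.1 hy) hxy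
    exact (ball_disjoint_ball (by linarith)).mono inter_subset_right inter_subset_right
  -- put it together
  have hvol : (N : ℝ≥0∞) * (ENNReal.ofReal ((r/2)^(d:ℕ)) * B) ≤
      volume (innNbhd d Ω (Γ ∩ ball z R) r) := by
    calc (N : ℝ≥0∞) * (ENNReal.ofReal ((r/2)^(d:ℕ)) * B)
        = ∑ x ∈ F, (ENNReal.ofReal ((r/2)^(d:ℕ)) * B) := by
          rw [Finset.sum_const, nsmul_eq_mul, hN]
      _ = ∑ x ∈ F, volume (ball x (r/2)) := by
          refine Finset.sum_congr rfl fun x _ => ?_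
          rw [hB, Measure.addHaar_ball volume _ (by positivity : (0:ℝ) ≤ r/2),
            finrank_euclideanSpace_fin]
      _ ≤ ∑ x ∈ F, volume (closure Ω ∩ ball x (r/2)) := Finset.sum_le_sum hdens
      _ = volume (⋃ x ∈ F, closure Ω ∩ ball x (r/2)) :=
          (measure_biUnion_finset hdisj fun x _ =>
            isClosed_closure.measurableSet.inter measurableSet_ball).symm
      _ ≤ volume (innNbhd d Ω (Γ ∩ ball z R) r) := measure_mono hsubN
  refine le_trans ?_ hvol
  -- final real-number computation
  rw [hωB, ← ENNReal.ofReal_mul (by positivity), ← ENNReal.ofReal_natCast,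
    ← ENNReal.ofReal_mul (Nat.cast_nonneg _)]
  apply ENNReal.ofReal_le_ofReal
  have hNd : (c⁻¹ * ρ^s) / (c * r^s) ≤ (N:ℝ) := by
    rw [div_le_iff₀ (by positivity)]
    linarith
  have e : r^((d:ℝ)-s) = r^(d:ℕ) / r^s := by
    rw [← Real.rpow_natCast r d, ← Real.rpow_sub hr]
  calc c⁻¹ * c⁻¹ * ρ^s * ω / 2^(d:ℕ) * r^((d:ℝ)-s)
      = ((c⁻¹ * ρ^s) / (c * r^s)) * ((r/2)^(d:ℕ) * ω) := by
        rw [e, div_pow]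
        field_simp
    _ ≤ (N:ℝ) * ((r/2)^(d:ℕ) * ω) := mul_le_mul_of_nonneg_right hNd (by positivity)
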